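/- (Spectral localization for the Szegedy walk) Every eigenvalue μ of the Szegedy walk U^{(P)} with μ ∉ {1,−1} satisfies: (μ + μ^{−1})/2 is an eigenvalue of the matrix J. In other words, apart from ±1, the spectrum of U^{(P)} is contained in the image of the spectrum of J under ν = cos θ ↦ e^{±iθ}. -/

import Mathlib

open Matrix Complex BigOperators

section QWFramework

variable {V : Type*}

instance arcDecPred (G : SimpleGraph V) [DecidableRel G.Adj] :
    DecidablePred fun p : V × V => G.Adj p.1 p.2 :=
  fun p => inferInstanceAs (Decidable (G.Adj p.1 p.2))

instance nbrDecPred (G : SimpleGraph V) [DecidableRel G.Adj] (u : V) :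
    DecidablePred (G.Adj u) :=
  fun w => inferInstanceAs (Decidable (G.Adj u w))

/-- The symmetric arc set `D(G)` of a graph: ordered pairs of adjacent vertices. -/
abbrev Arc (G : SimpleGraph V) : Type _ := {p : V × V // G.Adj p.1 p.2}

variable [Fintype V] [DecidableEq V]

/-- The shift (permutation) operator `S_σ` of a shift family `σ`, acting on `ℂ^{D(G)}`
by `S_σ |i,j⟩ = |j, σ_j(i)⟩`. -/
noncomputable def shiftOp (G : SimpleGraph V) [DecidableRel G.Adj]
    (σ : ∀ u : V, Equiv.Perm {w : V // G.Adj u w}) :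
    Matrix (Arc G) (Arc G) ℂ :=
  fun a b => if a.1.1 = b.1.2 ∧ a.1.2 = (σ b.1.2 ⟨b.1.1, b.2.symm⟩).1 then 1 else 0

/-- The flip-flop shift family: the identity permutation at every vertex. -/
def ffFam (G : SimpleGraph V) : ∀ u : V, Equiv.Perm {w : V // G.Adj u w} :=
  fun _ => Equiv.refl _

/-- The flip-flop shift operator `S`, with `S|i,j⟩ = |j,i⟩`. -/
noncomputable def ffShift (G : SimpleGraph V) [DecidableRel G.Adj] : Matrix (Arc G) (Arc G) ℂ :=
  shiftOp G (ffFam G)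

/-- The block-diagonal coin operator `C = ⊕_u H_u`, acting by
`C|i,j⟩ = Σ_{k∈N(i)} (H_i)_{k,j} |i,k⟩`. -/
noncomputable def coinOp (G : SimpleGraph V) [DecidableRel G.Adj]
    (H : ∀ u : V, Matrix {w : V // G.Adj u w} {w : V // G.Adj u w} ℂ) :
    Matrix (Arc G) (Arc G) ℂ :=
  fun a b => if h : a.1.1 = b.1.1 then H b.1.1 ⟨a.1.2, by rw [← h]; exact a.2⟩ ⟨b.1.2, b.2⟩ else 0

/-- The G-type (Gudder type) coined quantum walk `U^G_σ[H] = C·S_σ`. -/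
noncomputable def gWalk (G : SimpleGraph V) [DecidableRel G.Adj]
    (σ : ∀ u : V, Equiv.Perm {w : V // G.Adj u w})
    (H : ∀ u : V, Matrix {w : V // G.Adj u w} {w : V // G.Adj u w} ℂ) :
    Matrix (Arc G) (Arc G) ℂ :=
  coinOp G H * shiftOp G σ

/-- The A-type (Ambainis type) coined quantum walk `U^A_σ[H] = S_σ·C`. -/
noncomputable def aWalk (G : SimpleGraph V) [DecidableRel G.Adj]
    (σ : ∀ u : V, Equiv.Perm {w : V // G.Adj u w})
    (H : ∀ u : V, Matrix {w : V // G.Adj u w} {w : V // G.Adj u w} ℂ) :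
    Matrix (Arc G) (Arc G) ℂ :=
  shiftOp G σ * coinOp G H

end QWFramework

/-- The Szegedy local coin at vertex `j`: `(H_j)_{m,l} = 2√(p_{j,l}p_{j,m}) − δ_{l,m}`. -/
noncomputable def szCoin {V : Type*} [Fintype V] [DecidableEq V]
    (G : SimpleGraph V) [DecidableRel G.Adj] (p : V → V → ℝ) (j : V) :
    Matrix {w : V // G.Adj j w} {w : V // G.Adj j w} ℂ :=
  fun m l => ((2 * Real.sqrt (p j l.1 * p j m.1) : ℝ) : ℂ) - if l = m then 1 else 0

/-- The Szegedy walk `U^{(P)} = S·C`: the A-type walk with flip-flop shift and Szegedy coins. -/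
noncomputable def szWalk {V : Type*} [Fintype V] [DecidableEq V]
    (G : SimpleGraph V) [DecidableRel G.Adj] (p : V → V → ℝ) :
    Matrix (Arc G) (Arc G) ℂ :=
  ffShift G * coinOp G (szCoin G p)

/-- The map `A : ℂ^V → ℂ^{D(G)}`, `A|j⟩ = Σ_{l∈N(j)} √(p_{j,l}) |j,l⟩`, as a matrix. -/
noncomputable def szA {V : Type*} [Fintype V] [DecidableEq V]
    (G : SimpleGraph V) [DecidableRel G.Adj] (p : V → V → ℝ) :
    Matrix (Arc G) V ℂ :=
  fun a i => if a.1.1 = i then ((Real.sqrt (p a.1.1 a.1.2) : ℝ) : ℂ) else 0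

/-- The `|V|×|V|` matrix `J` with `(J)_{u,v} = √(p_{u,v} p_{v,u})` on arcs and `0` otherwise. -/
noncomputable def szJ {V : Type*} [Fintype V] [DecidableEq V]
    (G : SimpleGraph V) [DecidableRel G.Adj] (p : V → V → ℝ) :
    Matrix V V ℂ :=
  fun u v => if G.Adj u v then ((Real.sqrt (p u v * p v u) : ℝ) : ℂ) else 0

set_option linter.unusedSectionVars false
namespace SzHelper

variable {V : Type*} [Fintype V] [DecidableEq V]
variable (G : SimpleGraph V) [DecidableRel G.Adj]

/-- Arc reversal. -/
def arcRev (a : Arc G) : Arc G := ⟨(a.1.2, a.1.1), a.2.symm⟩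

@[simp] lemma arcRev_rev (a : Arc G) : arcRev G (arcRev G a) = a := by
  cases a; rfl

lemma ffShift_eq (a b : Arc G) :
    ffShift G a b = if b = arcRev G a then 1 else 0 := by
  show (if a.1.1 = b.1.2 ∧ a.1.2 = ((ffFam G b.1.2) ⟨b.1.1, b.2.symm⟩).1 then (1:ℂ) else 0) = _
  simp only [ffFam, Equiv.refl_apply]
  refine if_congr ?_ rfl rfl
  constructor
  · rintro ⟨h1, h2⟩; exact Subtype.ext (Prod.ext h2.symm h1.symm)
  · rintro rfl; exact ⟨rfl, rfl⟩

lemma sum_arc (f : V × V → ℂ) :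
    ∑ a : Arc G, f a.1 = ∑ u : V, ∑ w : V, if G.Adj u w then f (u, w) else 0 := by
  rw [← Finset.sum_subtype (Finset.univ.filter (fun x : V × V => G.Adj x.1 x.2))
      (by simp) f, Finset.sum_filter, Fintype.sum_prod_type]

lemma hSS : ffShift G * ffShift G = 1 := by
  ext a b
  simp only [Matrix.mul_apply, ffShift_eq, Matrix.one_apply, ite_mul, one_mul, zero_mul]
  rw [Finset.sum_ite_eq' Finset.univ (arcRev G a)]
  simp [eq_comm]

variable (p : V → V → ℝ)

lemma coin_eq (hp0 : ∀ u v, 0 ≤ p u v) :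
    coinOp G (szCoin G p) = (2:ℂ) • (szA G p * (szA G p)ᵀ) - 1 := by
  ext a b
  simp only [coinOp, szCoin, szA, Matrix.sub_apply, Matrix.smul_apply, Matrix.mul_apply,
    Matrix.transpose_apply, Matrix.one_apply, smul_eq_mul]
  by_cases h : a.1.1 = b.1.1
  · rw [dif_pos h]
    have hsum : ∑ i : V, (if a.1.1 = i then ((Real.sqrt (p a.1.1 a.1.2) : ℝ) : ℂ) else 0) *
        (if b.1.1 = i then ((Real.sqrt (p b.1.1 b.1.2) : ℝ) : ℂ) else 0)
        = ((Real.sqrt (p a.1.1 a.1.2) : ℝ) : ℂ) * ((Real.sqrt (p b.1.1 b.1.2) : ℝ) : ℂ) := by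
      rw [Finset.sum_eq_single a.1.1]
      · simp [h]
      · intro c _ hc; simp [Ne.symm hc]
      · simp
    rw [hsum]
    have hab : (a = b) ↔ (a.1.2 = b.1.2) := by
      constructor
      · rintro rfl; rfl
      · intro h2; exact Subtype.ext (Prod.ext h h2)
    have hsq : Real.sqrt (p b.1.1 b.1.2 * p b.1.1 a.1.2)
        = Real.sqrt (p a.1.1 a.1.2) * Real.sqrt (p b.1.1 b.1.2) := by
      rw [Real.sqrt_mul (hp0 _ _), h, mul_comm]
    rw [hsq]
    have hδ : (if (⟨b.1.2, b.2⟩ : {w // G.Adj b.1.1 w}) = ⟨a.1.2, h ▸ a.2⟩ then (1:ℂ) else 0)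
        = if a = b then 1 else 0 := by
      simp only [Subtype.mk.injEq, hab]
      exact if_congr eq_comm rfl rfl
    rw [hδ]
    push_cast
    ring
  · rw [dif_neg h]
    have hδ : (if a = b then (1:ℂ) else 0) = 0 := by
      rw [if_neg]; intro hh; exact h (by rw [hh])
    rw [hδ]
    have : ∀ i : V, (if a.1.1 = i then ((Real.sqrt (p a.1.1 a.1.2) : ℝ) : ℂ) else 0) *
        (if b.1.1 = i then ((Real.sqrt (p b.1.1 b.1.2) : ℝ) : ℂ) else 0) = 0 := by
      intro i
      rcases eq_or_ne b.1.1 i with h2 | h2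
      · rw [if_neg (show ¬ a.1.1 = i from fun hh => h (hh.trans h2.symm)), zero_mul]
      · rw [if_neg h2, mul_zero]
    rw [Finset.sum_congr rfl (fun i _ => this i), Finset.sum_const_zero]
    ring

lemma hAtA (hp0 : ∀ u v, 0 ≤ p u v)
    (hpsum : ∀ u : V, ∑ w ∈ G.neighborFinset u, p u w = 1) :
    (szA G p)ᵀ * szA G p = 1 := by
  ext u v
  simp only [Matrix.mul_apply, Matrix.transpose_apply, szA, Matrix.one_apply]
  rw [sum_arc G (fun x => (if x.1 = u then ((Real.sqrt (p x.1 x.2) : ℝ) : ℂ) else 0) *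
      (if x.1 = v then ((Real.sqrt (p x.1 x.2) : ℝ) : ℂ) else 0))]
  rw [Finset.sum_eq_single u]
  · by_cases huv : u = v
    · subst huv
      simp only [eq_self_iff_true, if_true]
      have : ∀ w : V, (if G.Adj u w then ((Real.sqrt (p u w) : ℝ) : ℂ) *
          ((Real.sqrt (p u w) : ℝ) : ℂ) else 0)
          = if w ∈ G.neighborFinset u then ((p u w : ℝ) : ℂ) else 0 := by
        intro w
        by_cases hw : G.Adj u w
        · rw [if_pos hw, if_pos ((SimpleGraph.mem_neighborFinset _ _ _).mpr hw),
            ← Complex.ofReal_mul, Real.mul_self_sqrt (hp0 _ _)]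
        · rw [if_neg hw, if_neg (fun hm => hw ((SimpleGraph.mem_neighborFinset _ _ _).mp hm))]
      rw [Finset.sum_congr rfl (fun w _ => this w), Finset.sum_ite_mem,
        Finset.univ_inter, ← Complex.ofReal_sum]
      rw [hpsum u]
      simp
    · rw [if_neg huv]
      apply Finset.sum_eq_zero
      intro w _
      rw [if_neg huv, mul_zero, ite_self]
  · intro c _ hc
    apply Finset.sum_eq_zero
    intro w _
    rw [if_neg hc, zero_mul, ite_self]
  · simp

lemma hAtSA (hp0 : ∀ u v, 0 ≤ p u v) :
    (szA G p)ᵀ * (ffShift G * szA G p) = szJ G p := by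
  have hSA : ∀ (a : Arc G) (v : V), (ffShift G * szA G p) a v
      = if a.1.2 = v then ((Real.sqrt (p a.1.2 a.1.1) : ℝ) : ℂ) else 0 := by
    intro a v
    simp only [Matrix.mul_apply, ffShift_eq, ite_mul, one_mul, zero_mul]
    rw [Finset.sum_ite_eq' Finset.univ (arcRev G a)]
    simp [szA, arcRev]
    split_ifs <;> simp_all
  ext u v
  rw [Matrix.mul_apply]
  simp only [Matrix.transpose_apply, hSA, szA]
  show _ = szJ G p u v
  simp only [szJ]
  rw [sum_arc G (fun x => (if x.1 = u then ((Real.sqrt (p x.1 x.2) : ℝ) : ℂ) else 0) *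
      (if x.2 = v then ((Real.sqrt (p x.2 x.1) : ℝ) : ℂ) else 0))]
  rw [Finset.sum_eq_single u]
  · rw [Finset.sum_eq_single v]
    · simp only [eq_self_iff_true, if_true]
      by_cases hadj : G.Adj u v
      · rw [if_pos hadj, if_pos hadj, ← Complex.ofReal_mul, ← Real.sqrt_mul (hp0 _ _)]
      · simp [hadj]
    · intro w _ hw
      by_cases hadj : G.Adj u w
      · rw [if_pos hadj, if_neg hw, mul_zero]
      · rw [if_neg hadj]
    · simp
  · intro c _ hc
    apply Finset.sum_eq_zero
    intro w _
    rw [if_neg hc, zero_mul, ite_self]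
  · simp

end SzHelper


/-- spectral localization for the Szegedy walk: every eigenvalue `μ ∉ {1,−1}`
of `U^{(P)}` satisfies that `(μ + μ⁻¹)/2` is an eigenvalue of `J`. -/
theorem szWalk_eigenvalue_of_J {V : Type*} [Fintype V] [DecidableEq V]
    (G : SimpleGraph V) [DecidableRel G.Adj] (hG : G.Connected)
    (p : V → V → ℝ) (hp0 : ∀ u v, 0 ≤ p u v) (hpadj : ∀ u v, ¬ G.Adj u v → p u v = 0)
    (hpsum : ∀ u : V, ∑ w ∈ G.neighborFinset u, p u w = 1) :
    ∀ μ : ℂ, Module.End.HasEigenvalue (Matrix.toLin' (szWalk G p)) μ →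
      μ ≠ 1 → μ ≠ -1 →
      Module.End.HasEigenvalue (Matrix.toLin' (szJ G p)) ((μ + μ⁻¹) / 2) := by
  intro μ hμ h1 h1'
  classical
  obtain ⟨ψ, hψ⟩ := hμ.exists_hasEigenvector
  have hψ0 : ψ ≠ 0 := hψ.right
  have hUψ : (szWalk G p).mulVec ψ = μ • ψ := by
    have h := hψ.apply_eq_smul
    simpa [Matrix.toLin'_apply] using h
  have hC := SzHelper.coin_eq G p hp0
  have hAtA := SzHelper.hAtA G p hp0 hpsum
  have hSS := SzHelper.hSS G
  have hJ := SzHelper.hAtSA G p hp0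
  -- abbreviations (as plain terms)
  -- U = 2 • (S*A*Aᵀ) - S
  have hU : szWalk G p
      = (2:ℂ) • (ffShift G * szA G p * (szA G p)ᵀ) - ffShift G := by
    rw [szWalk, hC, Matrix.mul_sub, Matrix.mul_smul, Matrix.mul_one, ← Matrix.mul_assoc]
  rw [hU, Matrix.sub_mulVec, Matrix.smul_mulVec, ← Matrix.mulVec_mulVec] at hUψ
  -- now hUψ : 2 • (S*A) *ᵥ (Aᵀ *ᵥ ψ) - S *ᵥ ψ = μ • ψ
  have hf0 : (szA G p)ᵀ.mulVec ψ ≠ 0 := by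
    intro h0
    rw [h0, Matrix.mulVec_zero, smul_zero, zero_sub] at hUψ
    have h2 : ffShift G *ᵥ ψ = -(μ • ψ) := by rw [← hUψ, neg_neg]
    have h3 : ψ = (μ * μ) • ψ := by
      calc ψ = (ffShift G * ffShift G) *ᵥ ψ := by rw [hSS, Matrix.one_mulVec]
      _ = ffShift G *ᵥ (ffShift G *ᵥ ψ) := (Matrix.mulVec_mulVec ψ _ _).symm
      _ = ffShift G *ᵥ (-(μ • ψ)) := by rw [h2]
      _ = -(μ • (ffShift G *ᵥ ψ)) := by rw [Matrix.mulVec_neg, Matrix.mulVec_smul]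
      _ = (μ * μ) • ψ := by rw [h2, smul_neg, neg_neg, smul_smul]
    have h4 : (μ * μ - 1) • ψ = 0 := by rw [sub_smul, one_smul, ← h3, sub_self]
    rcases smul_eq_zero.mp h4 with h5 | h5
    · rcases mul_self_eq_one_iff.mp (sub_eq_zero.mp h5) with h6 | h6
      · exact h1 h6
      · exact h1' h6
    · exact hψ0 h5
  have hμ0 : μ ≠ 0 := by
    intro h0
    rw [h0, zero_smul, sub_eq_zero] at hUψ
    -- hUψ : 2 • (S*A) *ᵥ f = S *ᵥ ψ
    have h3 : ψ = (2:ℂ) • szA G p *ᵥ ((szA G p)ᵀ *ᵥ ψ) := by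
      calc ψ = (ffShift G * ffShift G) *ᵥ ψ := by rw [hSS, Matrix.one_mulVec]
      _ = ffShift G *ᵥ (ffShift G *ᵥ ψ) := (Matrix.mulVec_mulVec ψ _ _).symm
      _ = ffShift G *ᵥ ((2:ℂ) • (ffShift G * szA G p) *ᵥ ((szA G p)ᵀ *ᵥ ψ)) := by
          rw [hUψ]
      _ = (2:ℂ) • (ffShift G * (ffShift G * szA G p)) *ᵥ ((szA G p)ᵀ *ᵥ ψ) := by
          rw [Matrix.mulVec_smul, Matrix.mulVec_mulVec]
      _ = (2:ℂ) • szA G p *ᵥ ((szA G p)ᵀ *ᵥ ψ) := by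
          rw [← Matrix.mul_assoc, hSS, Matrix.one_mul]
    have h4 : (szA G p)ᵀ *ᵥ ψ = (2:ℂ) • ((szA G p)ᵀ *ᵥ ψ) := by
      conv_lhs => rw [h3]
      rw [Matrix.mulVec_smul, Matrix.mulVec_mulVec, hAtA, Matrix.one_mulVec]
    have h5 : (szA G p)ᵀ *ᵥ ψ = 0 := by
      have h6 : (2:ℂ) • ((szA G p)ᵀ *ᵥ ψ) - (szA G p)ᵀ *ᵥ ψ = 0 := by
        rw [← h4, sub_self]
      rwa [two_smul, add_sub_cancel_right] at h6
    exact hf0 h5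
  -- step C
  have hASSA : (szA G p)ᵀ * ffShift G * (ffShift G * szA G p) = 1 := by
    rw [Matrix.mul_assoc ((szA G p)ᵀ) (ffShift G) _, ← Matrix.mul_assoc (ffShift G) _ _,
      hSS, Matrix.one_mul, hAtA]
  have hASS : (szA G p)ᵀ * ffShift G * ffShift G = (szA G p)ᵀ := by
    rw [Matrix.mul_assoc, hSS, Matrix.mul_one]
  have hAS : ((szA G p)ᵀ * ffShift G) *ᵥ ψ = μ⁻¹ • ((szA G p)ᵀ *ᵥ ψ) := by
    have h := congrArg (((szA G p)ᵀ * ffShift G).mulVec) hUψ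
    rw [Matrix.mulVec_sub, Matrix.mulVec_smul, Matrix.mulVec_mulVec, Matrix.mulVec_mulVec,
      Matrix.mulVec_mulVec, Matrix.mulVec_smul, hASSA, hASS, Matrix.one_mul] at h
    -- h : 2 • (Aᵀ*ᵥψ) - Aᵀ*ᵥψ = μ • ((Aᵀ*S)*ᵥψ)
    rw [two_smul, add_sub_cancel_right] at h
    rw [eq_inv_smul_iff₀ hμ0]
    exact h.symm
  -- step D
  have hD := congrArg ((szA G p)ᵀ.mulVec) hUψ
  rw [Matrix.mulVec_sub, Matrix.mulVec_smul, Matrix.mulVec_mulVec, Matrix.mulVec_mulVec,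
    Matrix.mulVec_smul, hJ, ← Matrix.mulVec_mulVec,
    Matrix.mulVec_mulVec ψ ((szA G p)ᵀ) (ffShift G), hAS] at hD
  -- hD : 2 • (szJ *ᵥ (Aᵀ*ᵥψ)) - μ⁻¹ • (Aᵀ*ᵥψ) = μ • (Aᵀ*ᵥψ)
  have hfinal : szJ G p *ᵥ ((szA G p)ᵀ *ᵥ ψ) = ((μ + μ⁻¹) / 2) • ((szA G p)ᵀ *ᵥ ψ) := by
    have h2 : (2:ℂ) • (szJ G p *ᵥ ((szA G p)ᵀ *ᵥ ψ))
        = (μ + μ⁻¹) • ((szA G p)ᵀ *ᵥ ψ) := by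
      rw [add_smul]
      exact sub_eq_iff_eq_add.mp hD
    have h3 : szJ G p *ᵥ ((szA G p)ᵀ *ᵥ ψ)
        = ((1:ℂ)/2) • ((2:ℂ) • (szJ G p *ᵥ ((szA G p)ᵀ *ᵥ ψ))) := by
      rw [smul_smul]; norm_num
    rw [h3, h2, smul_smul]
    congr 1
    ring
  exact Module.End.hasEigenvalue_of_hasEigenvector
    ⟨Module.End.mem_eigenspace_iff.mpr (by rw [Matrix.toLin'_apply]; exact hfinal), hf0⟩
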